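/- There exists a strictly positive continuous function q on G with q(e)=1 and q(ng) = Δ_N(n)·Δ_G(n)⁻¹·q(g) for all n ∈ N and g ∈ G, where Δ_G and Δ_N are the modular functions of G and N respectively. -/

import Mathlib

open MeasureTheory

set_option linter.unusedSectionVars false
set_option linter.unusedVariables false

open Set Topology Pointwise Filter

section RhoAux

variable {X : Type*} [Group X] [TopologicalSpace X] [IsTopologicalGroup X]
  [MeasurableSpace X] [BorelSpace X]

theorem rho_aux_cancel {μ : Measure X} {s : Set X} (h0 : μ s ≠ 0) (ht : μ s ≠ ⊤)
    {a b : ℝ} (ha : 0 ≤ a) (hb : 0 ≤ b)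
    (h : ENNReal.ofReal a • μ = ENNReal.ofReal b • μ) : a = b := by
  have h' : ENNReal.ofReal a * μ s = ENNReal.ofReal b * μ s := by
    have := congrArg (fun m : Measure X => m s) h
    simpa [Measure.smul_apply, smul_eq_mul] using this
  have h'' : ENNReal.ofReal a = ENNReal.ofReal b := by
    have hc := ENNReal.mul_inv_cancel h0 ht
    calc ENNReal.ofReal a = ENNReal.ofReal a * (μ s * (μ s)⁻¹) := by rw [hc, mul_one]
      _ = ENNReal.ofReal b * (μ s * (μ s)⁻¹) := by rw [← mul_assoc, h', mul_assoc]
      _ = ENNReal.ofReal b := by rw [hc, mul_one]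
  exact (ENNReal.ofReal_eq_ofReal_iff ha hb).mp h''

theorem rho_aux_hom {μ : Measure X} {s : Set X} (h0 : μ s ≠ 0) (ht : μ s ≠ ⊤)
    {Δ : X → ℝ} (hpos : ∀ x, 0 < Δ x)
    (hΔ : ∀ a : X, μ.map (fun g => a⁻¹ * g) = ENNReal.ofReal (Δ a) • μ) (a b : X) :
    Δ (a * b) = Δ a * Δ b := by
  have hmble : ∀ c : X, Measurable fun g : X => c⁻¹ * g := fun c =>
    (continuous_const.mul continuous_id).measurable
  have key : μ.map (fun g => (a * b)⁻¹ * g) = ENNReal.ofReal (Δ a * Δ b) • μ := by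
    have hcomp : (fun g : X => (a * b)⁻¹ * g) = (fun g => b⁻¹ * g) ∘ fun g => a⁻¹ * g := by
      funext g; simp [mul_assoc]
    rw [hcomp, ← Measure.map_map (hmble b) (hmble a), hΔ a, Measure.map_smul, hΔ b, smul_smul,
      ← ENNReal.ofReal_mul (hpos a).le]
  exact rho_aux_cancel h0 ht (hpos _).le (mul_nonneg (hpos _).le (hpos _).le)
    ((hΔ (a * b)).symm.trans key)

theorem rho_aux_translate {μ : Measure X} {Δ : X → ℝ} (hpos : ∀ x, 0 < Δ x)
    (hΔ : ∀ a : X, μ.map (fun g => a⁻¹ * g) = ENNReal.ofReal (Δ a) • μ)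
    (m : X) {h : X → ℝ} (hh : Continuous h) :
    ∫ n, h (m * n) ∂μ = Δ m⁻¹ * ∫ n, h n ∂μ := by
  have hmap : μ.map (fun n => m * n) = ENNReal.ofReal (Δ m⁻¹) • μ := by
    simpa using hΔ m⁻¹
  have hme : Measurable fun n : X => m * n := (continuous_const.mul continuous_id).measurable
  rw [← integral_map hme.aemeasurable hh.aestronglyMeasurable, hmap, integral_smul_measure,
    ENNReal.toReal_ofReal (hpos _).le, smul_eq_mul]

end RhoAux


set_option maxHeartbeats 1000000 in
theorem exists_bruhat_function {G : Type*} [Group G] [TopologicalSpace G] [IsTopologicalGroup G]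
    [LocallyCompactSpace G] (N : Subgroup G) (hN : IsClosed (N : Set G)) :
    ∃ f : G → ℝ, Continuous f ∧ (∀ x, 0 ≤ f x) ∧
      (∀ g : G, ∃ n ∈ (N : Set G), 0 < f (g * n)) ∧
      (∀ g : G, ∃ O ∈ nhds g, ∃ T : Set G, IsCompact T ∧ IsClosed T ∧
        ∀ y ∈ O, ∀ n ∈ (N : Set G), f (y * n) ≠ 0 → y * n ∈ T) := by
  classical
  obtain ⟨K, hKc, hKn⟩ := exists_compact_mem_nhds (1 : G)
  -- a compact symmetric neighbourhood of 1
  set U : Set G := K * K⁻¹ with hUdef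
  have hUc : IsCompact U := hKc.mul hKc.inv
  have hUinv : U⁻¹ = U := by rw [hUdef, mul_inv_rev, inv_inv]
  have h1U : (1 : G) ∈ interior U := by
    have h1K : (1 : G) ∈ K := mem_of_mem_nhds hKn
    have hsub : interior K * K⁻¹ ⊆ U := Set.mul_subset_mul interior_subset subset_rfl
    have ho : IsOpen (interior K * K⁻¹) := isOpen_interior.mul_right
    have h1' : (1 : G) ∈ interior K * K⁻¹ := by
      refine ⟨1, mem_interior_iff_mem_nhds.2 hKn, 1, ?_, one_mul 1⟩
      simpa using h1K
    exact interior_maximal hsub ho h1'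
  set V : Set G := interior U with hVdef
  have hVo : IsOpen V := isOpen_interior
  have h1V : (1 : G) ∈ V := h1U
  have hVU : V ⊆ U := interior_subset
  have hUone : (1 : G) ∈ U := hVU h1V
  -- powers of U
  have hpow_mono : ∀ j : ℕ, U ^ j ⊆ U ^ (j + 1) := by
    intro j x hx
    rw [pow_succ]
    exact mul_one x ▸ Set.mul_mem_mul hx hUone
  have hpow_le : ∀ {i j : ℕ}, i ≤ j → U ^ i ⊆ U ^ j := by
    intro i j h
    induction h with
    | refl => exact subset_rfl
    | step h ih => exact ih.trans (hpow_mono _)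
  have hpow_comp : ∀ j : ℕ, IsCompact (U ^ j) := by
    intro j
    induction j with
    | zero =>
      rw [pow_zero, ← Set.singleton_one]
      exact isCompact_singleton
    | succ n ih => rw [pow_succ]; exact ih.mul hUc
  -- the double coset relation
  obtain ⟨R, hR⟩ : ∃ R : G → G → Prop,
      ∀ a b, R a b ↔ ∃ j : ℕ, ∃ h ∈ U ^ j, ∃ n ∈ (N : Set G), b = h * a * n :=
    ⟨_, fun _ _ => Iff.rfl⟩
  have hRrefl : ∀ a, R a a := by
    intro a
    rw [hR]
    exact ⟨0, 1, by simp [pow_zero], 1, SetLike.mem_coe.mpr N.one_mem, by simp⟩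
  have hRsymm : ∀ {a b}, R a b → R b a := by
    intro a b h
    rw [hR] at h ⊢
    obtain ⟨j, h', hh, n, hn, rfl⟩ := h
    refine ⟨j, h'⁻¹, ?_, n⁻¹, ?_, by group⟩
    · have : h'⁻¹ ∈ (U ^ j)⁻¹ := Set.inv_mem_inv.2 hh
      rwa [← inv_pow, hUinv] at this
    · exact N.inv_mem hn
  have hRtrans : ∀ {a b c}, R a b → R b c → R a c := by
    intro a b c h1 h2
    rw [hR] at h1 h2 ⊢
    obtain ⟨j, h', hh, n, hn, rfl⟩ := h1
    obtain ⟨j', h'', hh', n', hn', rfl⟩ := h2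
    refine ⟨j' + j, h'' * h', ?_, n * n', N.mul_mem hn hn', by group⟩
    rw [pow_add]
    exact Set.mul_mem_mul hh' hh
  let S : Setoid G := ⟨R, ⟨hRrefl, fun h => hRsymm h, fun h h' => hRtrans h h'⟩⟩
  obtain ⟨rep, hrepdef⟩ : ∃ r : G → G, ∀ g, r g = (Quotient.mk S g).out := ⟨_, fun _ => rfl⟩
  have hrep_spec : ∀ g, R (rep g) g := by
    intro g
    rw [hrepdef]
    exact Quotient.exact (Quotient.out_eq (Quotient.mk S g))
  have hrep_congr : ∀ {a b}, R a b → rep a = rep b := by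
    intro a b h
    rw [hrepdef, hrepdef]
    exact congrArg Quotient.out (Quotient.sound h)
  have hrep_idem : ∀ g, rep (rep g) = rep g := fun g => hrep_congr (hrep_spec g)
  -- the layered sets over a base point b
  obtain ⟨Cs, hCs⟩ : ∃ Cs : G → ℕ → Set G, ∀ b j, Cs b j = U ^ j * {b} * N :=
    ⟨_, fun _ _ => rfl⟩
  obtain ⟨Os, hOs⟩ : ∃ Os : G → ℕ → Set G, ∀ b j, Os b j = V * Cs b j := ⟨_, fun _ _ => rfl⟩
  obtain ⟨Ps, hPs⟩ : ∃ Ps : G → ℕ → Set G, ∀ b j, Ps b j = ⋃ k, ⋃ (_ : k < j), Os b k :=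
    ⟨_, fun _ _ => rfl⟩
  obtain ⟨Ds, hDs⟩ : ∃ Ds : G → ℕ → Set G,
      ∀ b j, Ds b j = closure (V * (U ^ j * {b})) \ Ps b j := ⟨_, fun _ _ => rfl⟩
  obtain ⟨Bs, hBs⟩ : ∃ Bs : G → ℕ → Set G,
      ∀ b j, Bs b j = if 3 ≤ j then Cs b (j - 3) else ∅ := ⟨_, fun _ _ => rfl⟩
  obtain ⟨Ws, hWs⟩ : ∃ Ws : G → ℕ → Set G, ∀ b j, Ws b j = Os b (j + 1) \ Bs b j :=
    ⟨_, fun _ _ => rfl⟩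
  -- basic properties
  have hCclosed : ∀ b j, IsClosed (Cs b j) := by
    intro b j
    rw [hCs]
    exact IsClosed.mul_left_of_isCompact hN ((hpow_comp j).mul isCompact_singleton)
  have hCsat : ∀ b j {x n}, x ∈ Cs b j → n ∈ (N : Set G) → x * n ∈ Cs b j := by
    intro b j x n hx hn
    rw [hCs] at hx ⊢
    obtain ⟨c, hc, ν, hν, rfl⟩ := hx
    exact ⟨c, hc, ν * n, N.mul_mem hν hn, (mul_assoc _ _ _).symm⟩
  have hCmono : ∀ b {i j}, i ≤ j → Cs b i ⊆ Cs b j := by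
    intro b i j h
    rw [hCs, hCs]
    exact Set.mul_subset_mul (Set.mul_subset_mul (hpow_le h) subset_rfl) subset_rfl
  have hCO : ∀ b j, Cs b j ⊆ Os b j := by
    intro b j x hx
    rw [hOs]
    exact ⟨1, h1V, x, hx, one_mul x⟩
  have hOC : ∀ b j, Os b j ⊆ Cs b (j + 1) := by
    intro b j x hx
    rw [hOs] at hx
    rw [hCs] at hx ⊢
    obtain ⟨v, hv, c, hc, rfl⟩ := hx
    obtain ⟨w, hw, n, hn, rfl⟩ := hc
    obtain ⟨u, hu, b', hb', rfl⟩ := hw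
    cases Set.eq_of_mem_singleton hb'
    refine ⟨v * u * b, Set.mul_mem_mul ?_ rfl, n, hn, by group⟩
    rw [pow_succ']
    exact Set.mul_mem_mul (hVU hv) hu
  have hOopen : ∀ b j, IsOpen (Os b j) := by
    intro b j; rw [hOs]; exact hVo.mul_right
  have hOsat : ∀ b j {x n}, x ∈ Os b j → n ∈ (N : Set G) → x * n ∈ Os b j := by
    intro b j x n hx hn
    rw [hOs] at hx ⊢
    obtain ⟨v, hv, c, hc, rfl⟩ := hx
    exact ⟨v, hv, c * n, hCsat b j hc hn, (mul_assoc _ _ _).symm⟩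
  have hOmono : ∀ b {i j}, i ≤ j → Os b i ⊆ Os b j := by
    intro b i j h
    rw [hOs, hOs]
    exact Set.mul_subset_mul subset_rfl (hCmono b h)
  have hOpiece : ∀ b j, Os b j ⊆ {y | R b y} := by
    intro b j x hx
    have hx' := hOC b j hx
    rw [hCs] at hx'
    obtain ⟨w, hw, n, hn, rfl⟩ := hx'
    obtain ⟨u, hu, b', hb', rfl⟩ := hw
    cases Set.eq_of_mem_singleton hb'
    exact (hR b _).2 ⟨j + 1, u, hu, n, hn, rfl⟩
  have hBclosed : ∀ b j, IsClosed (Bs b j) := by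
    intro b j
    rw [hBs]
    split_ifs
    · exact hCclosed b _
    · exact isClosed_empty
  have hBsat : ∀ b j {x n}, x ∈ Bs b j → n ∈ (N : Set G) → x * n ∈ Bs b j := by
    intro b j x n hx hn
    rw [hBs] at hx ⊢
    split_ifs at hx ⊢ with h
    · exact hCsat b _ hx hn
    · exact hx
  have hWopen : ∀ b j, IsOpen (Ws b j) := by
    intro b j
    rw [hWs]
    exact (hOopen b (j + 1)).sdiff (hBclosed b j)
  have hWsat : ∀ b j {x n}, x ∈ Ws b j → n ∈ (N : Set G) → x * n ∈ Ws b j := by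
    intro b j x n hx hn
    rw [hWs] at hx ⊢
    refine ⟨hOsat b _ hx.1 hn, fun hmem => hx.2 ?_⟩
    have := hBsat b j hmem (N.inv_mem hn)
    simpa [mul_assoc] using this
  have hOW : ∀ b {m j}, m + 4 ≤ j → ∀ y ∈ Os b m, y ∉ Ws b j := by
    intro b m j hmj y hy hyW
    rw [hWs] at hyW
    apply hyW.2
    rw [hBs, if_pos (by omega : 3 ≤ j)]
    exact hCmono b (by omega : m + 1 ≤ j - 3) (hOC b m hy)
  have hcov : ∀ b g, R b g → ∃ j, g ∈ Os b j := by
    intro b g h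
    rw [hR] at h
    obtain ⟨j, h', hh, n, hn, rfl⟩ := h
    refine ⟨j, hCO b j ?_⟩
    rw [hCs]
    exact ⟨h' * b, Set.mul_mem_mul hh rfl, n, hn, rfl⟩
  have hDcomp : ∀ b j, IsCompact (Ds b j) := by
    intro b j
    rw [hDs]
    have hsub : V * (U ^ j * {b}) ⊆ U ^ (j + 1) * {b} := by
      rw [pow_succ', mul_assoc]
      exact Set.mul_subset_mul hVU subset_rfl
    have hcl : IsCompact (closure (V * (U ^ j * {b}))) :=
      IsCompact.closure_of_subset ((hpow_comp (j + 1)).mul isCompact_singleton) hsub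
    refine hcl.diff ?_
    rw [hPs]
    exact isOpen_iUnion fun k => isOpen_iUnion fun _ => hOopen b k
  have hDW : ∀ b j, Ds b j ⊆ Ws b j := by
    intro b j x hx
    rw [hDs] at hx
    rw [hWs]
    constructor
    · have hsub : V * (U ^ j * {b}) ⊆ Cs b (j + 1) := by
        intro y hy
        rw [hCs]
        refine ⟨y, ?_, 1, N.one_mem, mul_one y⟩
        rw [pow_succ', mul_assoc]
        exact Set.mul_subset_mul hVU subset_rfl hy
      exact hCO b (j + 1) (closure_minimal hsub (hCclosed b (j + 1)) hx.1)
    · intro hmem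
      rw [hBs] at hmem
      split_ifs at hmem with h3
      · apply hx.2
        rw [hPs]
        refine Set.mem_iUnion.2 ⟨j - 3, Set.mem_iUnion.2 ⟨by omega, hCO b _ hmem⟩⟩
      · exact hmem
  -- the Urysohn family
  have hfex : ∀ b j, ∃ f : C(G, ℝ), Set.EqOn f 1 (Ds b j) ∧ Set.EqOn f 0 (Ws b j)ᶜ ∧
      HasCompactSupport f ∧ ∀ x, f x ∈ Set.Icc (0 : ℝ) 1 := by
    intro b j
    exact exists_continuous_one_zero_of_isCompact (hDcomp b j) (hWopen b j).isClosed_compl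
      (disjoint_compl_right_iff_subset.2 (hDW b j))
  choose fj hfj1 hfj0 hfjcs hfj01 using hfex
  have hfjW : ∀ b j x, fj b j x ≠ 0 → x ∈ Ws b j := by
    intro b j x hx
    by_contra h
    exact hx (hfj0 b j h)
  -- vanishing of high-index functions on saturated neighbourhoods
  have hvan : ∀ b m', ∀ y ∈ Os b m', ∀ n ∈ (N : Set G), ∀ j, m' + 4 ≤ j →
      fj b j (y * n) = 0 := by
    intro b m' y hy n hn j hj
    by_contra hne
    have h1 := hfjW b j _ hne
    have h2 : y ∈ Ws b j := by
      have := hWsat b j h1 (N.inv_mem hn)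
      simpa [mul_assoc] using this
    exact hOW b hj y hy h2
  -- the summed function over a base point
  obtain ⟨fP, hfP⟩ : ∃ fP : G → G → ℝ, ∀ b x, fP b x = ∑' j, fj b j x := ⟨_, fun _ _ => rfl⟩
  have hfPnn : ∀ b x, 0 ≤ fP b x := by
    intro b x
    rw [hfP]
    exact tsum_nonneg fun j => (hfj01 b j x).1
  have hsum_eq : ∀ b (m' : ℕ) x, (∀ j, m' + 4 ≤ j → fj b j x = 0) →
      fP b x = ∑ j ∈ Finset.range (m' + 4), fj b j x := by
    intro b m' x h
    rw [hfP]
    exact tsum_eq_sum fun j hj => h j (le_of_not_gt (fun hc => hj (Finset.mem_range.2 hc)))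
  have hsummable : ∀ b (m' : ℕ) x, (∀ j, m' + 4 ≤ j → fj b j x = 0) →
      Summable fun j => fj b j x := by
    intro b m' x h
    exact summable_of_ne_finset_zero (s := Finset.range (m' + 4))
      fun j hj => h j (le_of_not_gt (fun hc => hj (Finset.mem_range.2 hc)))
  -- the global function
  refine ⟨fun x => fP (rep x) x, ?_, fun x => hfPnn _ _, ?_, ?_⟩
  -- continuity
  · rw [continuous_iff_continuousAt]
    intro x
    obtain ⟨m', hm'⟩ := hcov (rep x) x (hrep_spec x)
    have hOx : Os (rep x) m' ∈ nhds x := (hOopen (rep x) m').mem_nhds hm'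
    have heq : ∀ y ∈ Os (rep x) m',
        fP (rep y) y = ∑ j ∈ Finset.range (m' + 4), fj (rep x) j y := by
      intro y hy
      have hRy : R (rep x) y := hOpiece (rep x) m' hy
      have hrepy : rep y = rep x := by
        rw [← hrep_congr hRy, hrep_idem]
      rw [hrepy]
      refine hsum_eq (rep x) m' y fun j hj => ?_
      have := hvan (rep x) m' y hy 1 N.one_mem j hj
      simpa using this
    have hcontsum : Continuous fun y => ∑ j ∈ Finset.range (m' + 4), fj (rep x) j y :=
      continuous_finset_sum _ fun j _ => (fj (rep x) j).continuous
    refine hcontsum.continuousAt.congr ?_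
    exact Filter.eventuallyEq_of_mem hOx fun y hy => (heq y hy).symm
  -- positivity along cosets
  · intro g
    have hex : ∃ j, g ∈ Os (rep g) j := hcov (rep g) g (hrep_spec g)
    obtain ⟨b, hb⟩ : ∃ b, rep g = b := ⟨rep g, rfl⟩
    have hrepb : rep b = b := by rw [← hb]; exact hrep_idem g
    rw [hb] at hex
    set m0 := Nat.find hex with hm0
    have hg0 : g ∈ Os b m0 := Nat.find_spec hex
    rw [hOs, hCs] at hg0
    obtain ⟨v, hv, c, hc, hvc⟩ := hg0
    obtain ⟨w, hw, n, hn, rfl⟩ := hc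
    obtain ⟨u, hu, b', hb', rfl⟩ := hw
    cases Set.eq_of_mem_singleton hb'
    refine ⟨n⁻¹, N.inv_mem hn, ?_⟩
    have hgn : g * n⁻¹ = v * (u * b) := by rw [← hvc]; group
    have hxD : v * (u * b) ∈ Ds b m0 := by
      rw [hDs]
      constructor
      · exact subset_closure ⟨v, hv, u * b, Set.mul_mem_mul hu rfl, rfl⟩
      · intro hmem
        rw [hPs] at hmem
        obtain ⟨k, hk⟩ := Set.mem_iUnion.1 hmem
        obtain ⟨hklt, hkmem⟩ := Set.mem_iUnion.1 hk
        have : g ∈ Os b k := by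
          have := hOsat b k hkmem hn
          rwa [show v * (u * b) * n = g by rw [← hvc]; group] at this
        exact Nat.find_min hex hklt this
    have hfj1' : fj b m0 (v * (u * b)) = 1 := hfj1 b m0 hxD
    have hvux : v * u ∈ U ^ (m0 + 1) := by
      rw [pow_succ']
      exact Set.mul_mem_mul (hVU hv) hu
    have hxC : v * (u * b) ∈ Cs b (m0 + 1) := by
      rw [hCs]
      exact ⟨v * u * b, Set.mul_mem_mul hvux rfl, 1, N.one_mem, by group⟩
    have hxO : v * (u * b) ∈ Os b (m0 + 1) := hCO _ _ hxC
    have hRx : R b (v * (u * b)) := hOpiece b (m0 + 1) hxO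
    have hrepx : rep (v * (u * b)) = b := by
      rw [← hrep_congr hRx, hrepb]
    show 0 < fP (rep (g * n⁻¹)) (g * n⁻¹)
    rw [hgn, hrepx]
    have hvanx : ∀ j, (m0 + 1) + 4 ≤ j → fj b j (v * (u * b)) = 0 := by
      intro j hj
      have := hvan b (m0 + 1) _ hxO 1 N.one_mem j hj
      simpa using this
    have hsumm := hsummable b (m0 + 1) _ hvanx
    have hge : fj b m0 (v * (u * b)) ≤ fP b (v * (u * b)) := by
      rw [hfP]
      exact Summable.le_tsum hsumm m0 fun j _ => (hfj01 b j _).1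
    rw [hfj1'] at hge
    linarith
  -- local coset-support property
  · intro g
    obtain ⟨m', hm'⟩ := hcov (rep g) g (hrep_spec g)
    refine ⟨Os (rep g) m', (hOopen (rep g) m').mem_nhds hm',
      ⋃ j ∈ Finset.range (m' + 4), tsupport (fj (rep g) j), ?_, ?_, ?_⟩
    · exact (Finset.range (m' + 4)).finite_toSet.isCompact_biUnion fun j _ => hfjcs (rep g) j
    · exact (Finset.range (m' + 4)).finite_toSet.isClosed_biUnion fun j _ =>
        isClosed_closure
    · intro y hy n hn hfne
      have hRyn : R (rep g) (y * n) := by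
        refine hRtrans (hOpiece (rep g) m' hy) ?_
        rw [hR]
        exact ⟨0, 1, by simp [pow_zero], n, hn, by group⟩
      have hrepyn : rep (y * n) = rep g := by
        rw [← hrep_congr hRyn, hrep_idem]
      have hfne' : fP (rep (y * n)) (y * n) ≠ 0 := hfne
      rw [hrepyn] at hfne'
      have hvany : ∀ j, m' + 4 ≤ j → fj (rep g) j (y * n) = 0 := fun j hj =>
        hvan (rep g) m' y hy n hn j hj
      rw [hsum_eq (rep g) m' (y * n) hvany] at hfne'
      obtain ⟨j, hjmem, hjne⟩ : ∃ j ∈ Finset.range (m' + 4), fj (rep g) j (y * n) ≠ 0 := by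
        by_contra hc
        push_neg at hc
        exact hfne' (Finset.sum_eq_zero hc)
      exact Set.mem_biUnion hjmem (subset_tsupport _ hjne)

/-- **Existence of the rho-function.**
Let `G` be a locally compact group with right Haar measure `μG` and `N` a closed subgroup
with right Haar measure `μN`.  Let `ΔG` and `ΔN` be the modular functions of `G` and `N`,
characterized by `∫ f(a⁻¹ g) dg = Δ(a) ∫ f(g) dg` for right Haar measure, i.e. by
`μ.map (fun g => a⁻¹ * g) = Δ(a) • μ`.  Then there exists a strictly positive continuous
function `q` on `G` with `q(1) = 1` and `q (n * g) = ΔN n * (ΔG n)⁻¹ * q g` for all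
`n ∈ N`, `g ∈ G`. -/
theorem exists_rho_function
    {G : Type*} [Group G] [TopologicalSpace G] [IsTopologicalGroup G]
    [LocallyCompactSpace G] [MeasurableSpace G] [BorelSpace G]
    (N : Subgroup G) (hN : IsClosed (N : Set G))
    (μG : Measure G) (μN : Measure N)
    [IsFiniteMeasureOnCompacts μG] [μG.IsOpenPosMeasure]
    [IsFiniteMeasureOnCompacts μN] [μN.IsOpenPosMeasure]
    (hμG : ∀ a : G, μG.map (fun g => g * a) = μG)
    (hμN : ∀ a : N, μN.map (fun n => n * a) = μN)
    (ΔG : G → ℝ) (hΔGpos : ∀ g, 0 < ΔG g) (hΔGcont : Continuous ΔG)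
    (hΔG : ∀ a : G, μG.map (fun g => a⁻¹ * g) = ENNReal.ofReal (ΔG a) • μG)
    (ΔN : N → ℝ) (hΔNpos : ∀ n, 0 < ΔN n) (hΔNcont : Continuous ΔN)
    (hΔN : ∀ a : N, μN.map (fun n => a⁻¹ * n) = ENNReal.ofReal (ΔN a) • μN) :
    ∃ q : G → ℝ, Continuous q ∧ (∀ g, 0 < q g) ∧ q 1 = 1 ∧
      ∀ n : N, ∀ g : G, q ((n : G) * g) = ΔN n * (ΔG (n : G))⁻¹ * q g := by
  classical
  haveI : BorelSpace N := Subtype.borelSpace (N : Set G)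
  have hNemb : Topology.IsClosedEmbedding ((↑) : N → G) :=
    Topology.IsClosedEmbedding.subtypeVal hN
  -- sets of positive finite measure, for the homomorphism property
  obtain ⟨K, hKc, hKn⟩ := exists_compact_mem_nhds (1 : G)
  have h0G : μG (interior K) ≠ 0 :=
    (isOpen_interior.measure_ne_zero μG ⟨1, mem_interior_iff_mem_nhds.2 hKn⟩)
  have htG : μG (interior K) ≠ ⊤ :=
    ((measure_mono interior_subset).trans_lt hKc.measure_lt_top).ne
  have hKNc : IsCompact ((↑) ⁻¹' K : Set N) := hNemb.isCompact_preimage hKc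
  have h0N : μN ((↑) ⁻¹' K : Set N) ≠ 0 := by
    have hop : IsOpen ((↑) ⁻¹' interior K : Set N) := isOpen_interior.preimage continuous_subtype_val
    have hne : ((↑) ⁻¹' interior K : Set N).Nonempty :=
      ⟨1, by simpa using mem_interior_iff_mem_nhds.2 hKn⟩
    have := hop.measure_ne_zero μN hne
    intro h
    exact this (le_antisymm (h ▸ measure_mono (Set.preimage_mono interior_subset)) zero_le')
  have htN : μN ((↑) ⁻¹' K : Set N) ≠ ⊤ := hKNc.measure_lt_top.ne
  -- homomorphism properties of the modular functions
  have hGmul : ∀ a b : G, ΔG (a * b) = ΔG a * ΔG b := rho_aux_hom h0G htG hΔGpos hΔG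
  have hG1 : ΔG 1 = 1 := by
    have h := hGmul 1 1
    rw [one_mul] at h
    have h2 : ΔG 1 * ΔG 1 = ΔG 1 * 1 := by rw [mul_one, ← h]
    exact mul_left_cancel₀ (hΔGpos 1).ne' h2

  have hGinv : ∀ a : G, ΔG a⁻¹ = (ΔG a)⁻¹ := by
    intro a
    have h : ΔG a * ΔG a⁻¹ = 1 := by rw [← hGmul, mul_inv_cancel, hG1]
    exact eq_inv_of_mul_eq_one_right h
  have hNmul : ∀ a b : N, ΔN (a * b) = ΔN a * ΔN b := rho_aux_hom h0N htN hΔNpos hΔN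
  have hN1 : ΔN 1 = 1 := by
    have h := hNmul 1 1
    rw [one_mul] at h
    have h2 : ΔN 1 * ΔN 1 = ΔN 1 * 1 := by rw [mul_one, ← h]
    exact mul_left_cancel₀ (hΔNpos 1).ne' h2

  have hNinv : ∀ a : N, ΔN a⁻¹ = (ΔN a)⁻¹ := by
    intro a
    have h : ΔN a * ΔN a⁻¹ = 1 := by rw [← hNmul, mul_inv_cancel, hN1]
    exact eq_inv_of_mul_eq_one_right h
  -- the Bruhat function
  obtain ⟨f, hfc, hfnn, hfpos, hfloc⟩ := exists_bruhat_function N hN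
  -- the function p g = ∫_N f (g n) ΔG(n)⁻¹ dμN(n)
  set p : G → ℝ := fun g => ∫ n : N, f (g * (n : G)) * (ΔG (n : G))⁻¹ ∂μN with hp
  have hIcont : ∀ g : G, Continuous fun n : N => f (g * (n : G)) * (ΔG (n : G))⁻¹ :=
    fun g => ((hfc.comp (continuous_const.mul continuous_subtype_val)).mul
      ((hΔGcont.comp continuous_subtype_val).inv₀ fun n => (hΔGpos _).ne'))
  have hInn : ∀ (g : G) (n : N), 0 ≤ f (g * (n : G)) * (ΔG (n : G))⁻¹ :=
    fun g n => mul_nonneg (hfnn _) (inv_nonneg.2 (hΔGpos _).le)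
  -- integrability
  have hIint : ∀ g : G, Integrable (fun n : N => f (g * (n : G)) * (ΔG (n : G))⁻¹) μN := by
    intro g
    obtain ⟨O, hO, T, hTc, hTcl, hT⟩ := hfloc g
    have hLc : IsCompact ((↑) ⁻¹' ({g⁻¹} * T) : Set N) :=
      hNemb.isCompact_preimage (isCompact_singleton.mul hTc)
    have hLcl : IsClosed ((↑) ⁻¹' ({g⁻¹} * T) : Set N) :=
      (IsClosed.mul_left_of_isCompact hTcl isCompact_singleton).preimage continuous_subtype_val
    have hvanish : ∀ n : N, n ∉ ((↑) ⁻¹' ({g⁻¹} * T) : Set N) →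
        f (g * (n : G)) * (ΔG (n : G))⁻¹ = 0 := by
      intro n hn
      by_contra hne
      have hfne : f (g * (n : G)) ≠ 0 := fun h => hne (by rw [h, zero_mul])
      have hmem : g * (n : G) ∈ T := hT g (mem_of_mem_nhds hO) (n : G) n.2 hfne
      exact hn (by
        show (n : G) ∈ {g⁻¹} * T
        have : g⁻¹ * (g * (n : G)) = (n : G) := by group
        exact this ▸ Set.mul_mem_mul rfl hmem)
    have hcs : HasCompactSupport fun n : N => f (g * (n : G)) * (ΔG (n : G))⁻¹ :=
      HasCompactSupport.intro' hLc hLcl hvanish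
    exact (hIcont g).integrable_of_hasCompactSupport hcs
  -- positivity of p
  have hppos : ∀ g : G, 0 < p g := by
    intro g
    obtain ⟨n, hn, hfn⟩ := hfpos g
    have hkey := (integral_pos_iff_support_of_nonneg (fun n => hInn g n) (hIint g)).2
    refine hkey ?_
    have hop : IsOpen {x : N | 0 < f (g * (x : G)) * (ΔG (x : G))⁻¹} :=
      isOpen_lt continuous_const (hIcont g)
    have hne : {x : N | 0 < f (g * (x : G)) * (ΔG (x : G))⁻¹}.Nonempty :=
      ⟨⟨n, hn⟩, mul_pos hfn (inv_pos.2 (hΔGpos _))⟩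
    refine lt_of_lt_of_le (hop.measure_pos μN hne) (measure_mono ?_)
    intro x hx
    exact ne_of_gt hx
  -- continuity of p
  have hpcont : Continuous p := by
    rw [continuous_iff_continuousAt]
    intro g
    obtain ⟨O, hO, T, hTc, hTcl, hT⟩ := hfloc g
    obtain ⟨Q, hQn, hQO, hQc⟩ := local_compact_nhds hO
    have hLc : IsCompact ((↑) ⁻¹' (Q⁻¹ * T) : Set N) :=
      hNemb.isCompact_preimage (hQc.inv.mul hTc)
    have hjoint : Continuous (Function.uncurry
        fun (y : G) (n : N) => f (y * (n : G)) * (ΔG (n : G))⁻¹) := by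
      apply Continuous.mul
      · exact hfc.comp (continuous_fst.mul (continuous_subtype_val.comp continuous_snd))
      · exact ((hΔGcont.comp (continuous_subtype_val.comp continuous_snd)).inv₀
          fun x => (hΔGpos _).ne')
    have hvan : ∀ (y : G) (n : N), y ∈ Q → n ∉ ((↑) ⁻¹' (Q⁻¹ * T) : Set N) →
        f (y * (n : G)) * (ΔG (n : G))⁻¹ = 0 := by
      intro y n hy hn
      by_contra hne
      have hfne : f (y * (n : G)) ≠ 0 := fun h => hne (by rw [h, zero_mul])
      have hmem : y * (n : G) ∈ T := hT y (hQO hy) (n : G) n.2 hfne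
      refine hn ?_
      show (n : G) ∈ Q⁻¹ * T
      have : y⁻¹ * (y * (n : G)) = (n : G) := by group
      exact this ▸ Set.mul_mem_mul (Set.inv_mem_inv.2 hy) hmem
    have key : ContinuousOn (fun y => ∫ n : N, f (y * (n : G)) * (ΔG (n : G))⁻¹ ∂μN) Q :=
      continuousOn_integral_of_compact_support hLc hjoint.continuousOn hvan
    exact key.continuousAt hQn
  -- equivariance of p
  have hpeq : ∀ (g : G) (m : N), p (g * (m : G)) = ΔG (m : G) * ((ΔN m)⁻¹ * p g) := by
    intro g m
    have hstep : ∀ n : N, f (g * (m : G) * (n : G)) * (ΔG (n : G))⁻¹ =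
        ΔG (m : G) * (f (g * ((m * n : N) : G)) * (ΔG ((m * n : N) : G))⁻¹) := by
      intro n
      have hcoe : ((m * n : N) : G) = (m : G) * (n : G) := rfl
      rw [hcoe, hGmul, mul_assoc g]
      have h1 : ΔG (m : G) ≠ 0 := (hΔGpos _).ne'
      have h2 : ΔG (n : G) ≠ 0 := (hΔGpos _).ne'
      field_simp
    have htrans := rho_aux_translate hΔNpos hΔN m
      (h := fun n : N => f (g * (n : G)) * (ΔG (n : G))⁻¹) (hIcont g)
    calc p (g * (m : G)) = ∫ n : N, f (g * (m : G) * (n : G)) * (ΔG (n : G))⁻¹ ∂μN := rfl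
      _ = ∫ n : N, ΔG (m : G) * (f (g * ((m * n : N) : G)) * (ΔG ((m * n : N) : G))⁻¹) ∂μN := by
          simp_rw [hstep]
      _ = ΔG (m : G) * ∫ n : N, f (g * ((m * n : N) : G)) * (ΔG ((m * n : N) : G))⁻¹ ∂μN :=
          integral_const_mul _ _
      _ = ΔG (m : G) * (ΔN m⁻¹ * ∫ n : N, f (g * (n : G)) * (ΔG (n : G))⁻¹ ∂μN) := by
          rw [htrans]
      _ = ΔG (m : G) * ((ΔN m)⁻¹ * p g) := by rw [hNinv, hp]
  -- the rho function
  refine ⟨fun g => p g⁻¹ / p 1, ?_, ?_, ?_, ?_⟩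
  · exact (hpcont.comp continuous_inv).div_const _
  · exact fun g => div_pos (hppos _) (hppos 1)
  · simp only [inv_one]
    exact div_self (hppos 1).ne'
  · intro n g
    have hinv : ((n : G) * g)⁻¹ = g⁻¹ * ((n⁻¹ : N) : G) := by
      simp [mul_inv_rev]
    show p ((n : G) * g)⁻¹ / p 1 = ΔN n * (ΔG (n : G))⁻¹ * (p g⁻¹ / p 1)
    rw [hinv, hpeq g⁻¹ n⁻¹]
    have h1 : ΔG ((n⁻¹ : N) : G) = (ΔG (n : G))⁻¹ := by
      rw [show ((n⁻¹ : N) : G) = (n : G)⁻¹ from rfl, hGinv]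
    have h2 : (ΔN n⁻¹)⁻¹ = ΔN n := by rw [hNinv, inv_inv]
    rw [h1, h2]
    ring
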